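/- Let R be a commutative ring and J₁, …, J_k ideals of R. Let φ : R[t₁^{±1}, …, t_k^{±1}] → R[t, t⁻¹] be the R-algebra homomorphism sending each tᵢ to t. Then the image under φ of the multivariable extended Rees algebra A(J₁, …, J_k) is exactly the extended Rees algebra A(J₁ + ⋯ + J_k) of the sum ideal, i.e., the set of f ∈ R[t, t⁻¹] whose coefficient of t^m lies in (J₁ + ⋯ + J_k)^{max(−m,0)} for every integer m. -/

import Mathlib

/-- The multivariable extended Rees algebra
`A(J₁, …, J_k) ⊆ R[t₁^{±1}, …, t_k^{±1}]` (the monoid algebra of `ℤ^k` over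
`R`), as a set. -/
def multiReesSet {R : Type*} [CommRing R] {k : ℕ} (Js : Fin k → Ideal R) :
    Set (AddMonoidAlgebra R (Fin k → ℤ)) :=
  {f | ∀ m : Fin k → ℤ, f.coeff m ∈ ∏ i, Js i ^ (-(m i)).toNat}

/-- The extended Rees algebra `A(I) ⊆ R[t, t⁻¹]` of a single ideal, as a set. -/
def extendedReesSet {R : Type*} [CommRing R] (I : Ideal R) :
    Set (LaurentPolynomial R) :=
  {f | ∀ m : ℤ, f.coeff m ∈ I ^ (-m).toNat}

/-- The `R`-algebra homomorphism `R[t₁^{±1}, …, t_k^{±1}] → R[t, t⁻¹]` sending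
each variable `tᵢ` to `t`; on exponents it is the total-degree map
`(m₁, …, m_k) ↦ m₁ + ⋯ + m_k`. -/
noncomputable def collapseVars (R : Type*) [CommRing R] (k : ℕ) :
    AddMonoidAlgebra R (Fin k → ℤ) →ₐ[R] LaurentPolynomial R :=
  AddMonoidAlgebra.mapDomainAlgHom R R
    (AddMonoidHom.mk' (fun m : Fin k → ℤ => ∑ i, m i)
      (by intro a b; simpa using Finset.sum_add_distrib))

section Aux

variable {R : Type*} [CommRing R] {k : ℕ} (Js : Fin k → Ideal R)

theorem MRaux.prod_ideal_mono {ι : Type*} (s : Finset ι) (f g : ι → Ideal R)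
    (h : ∀ i ∈ s, f i ≤ g i) : ∏ i ∈ s, f i ≤ ∏ i ∈ s, g i := by
  classical
  induction s using Finset.induction with
  | empty => simp
  | @insert a s hx ih =>
    rw [Finset.prod_insert hx, Finset.prod_insert hx]
    exact Ideal.mul_mono (h a (Finset.mem_insert_self a s))
      (ih fun i hi => h i (Finset.mem_insert_of_mem hi))

theorem MRaux.mem_sum_ideals {ι : Type*} [DecidableEq ι] (s : Finset ι) (p : ι → Ideal R)
    {x : R} (hx : x ∈ ∑ i ∈ s, p i) :
    ∃ f : ι → R, (∀ i ∈ s, f i ∈ p i) ∧ x = ∑ i ∈ s, f i := by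
  induction s using Finset.induction generalizing x with
  | empty =>
    refine ⟨0, by simp, ?_⟩
    simpa using hx
  | @insert a s ha ih =>
    rw [Finset.sum_insert ha, Submodule.add_eq_sup, Submodule.mem_sup] at hx
    obtain ⟨y, hy, z, hz, rfl⟩ := hx
    obtain ⟨f, hf, rfl⟩ := ih hz
    refine ⟨Function.update f a y, ?_, ?_⟩
    · intro i hi
      rcases Finset.mem_insert.mp hi with rfl | hi
      · simp [Function.update_self, hy]
      · have hne : i ≠ a := fun h => ha (h ▸ hi)
        rw [Function.update_of_ne hne]
        exact hf i hi
    · rw [Finset.sum_insert ha, Function.update_self]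
      congr 1
      refine (Finset.sum_congr rfl fun i hi => ?_).symm
      have hne : i ≠ a := fun h => ha (h ▸ hi)
      exact Function.update_of_ne hne _ _

theorem MRaux.collapse_eq (g : AddMonoidAlgebra R (Fin k → ℤ)) :
    collapseVars R k g = AddMonoidAlgebra.mapDomain (fun m : Fin k → ℤ => ∑ i, m i) g := rfl

theorem MRaux.prod_le_sum_pow (m' : Fin k → ℤ) :
    ∏ i, Js i ^ (-(m' i)).toNat ≤ (∑ i, Js i) ^ (-(∑ i, m' i)).toNat := by
  have h1 : ∏ i, Js i ^ (-(m' i)).toNat ≤ ∏ i, (∑ j, Js j) ^ (-(m' i)).toNat :=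
    MRaux.prod_ideal_mono _ _ _ fun i _ =>
      Ideal.pow_right_mono (Finset.single_le_sum (f := Js) (fun j _ => bot_le)
        (Finset.mem_univ i)) _
  rw [Finset.prod_pow_eq_pow_sum] at h1
  refine h1.trans (Ideal.pow_le_pow_right ?_)
  rw [Int.toNat_le]
  push_cast
  calc -(∑ i, m' i) = ∑ i, -(m' i) := by rw [← Finset.sum_neg_distrib]
    _ ≤ ∑ i, ((-(m' i)).toNat : ℤ) := Finset.sum_le_sum fun i _ => Int.self_le_toNat _

theorem MRaux.collapse_mem {g : AddMonoidAlgebra R (Fin k → ℤ)}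
    (hg : g ∈ multiReesSet Js) :
    collapseVars R k g ∈ extendedReesSet (∑ i, Js i) := by
  intro m
  rw [MRaux.collapse_eq, AddMonoidAlgebra.mapDomain, AddMonoidAlgebra.coeff_ofCoeff, Finsupp.mapDomain, Finsupp.sum_apply]
  refine Submodule.sum_mem _ fun a _ => ?_
  simp only [Finsupp.single_apply]
  split_ifs with h
  · subst h
    exact MRaux.prod_le_sum_pow Js a (hg a)
  · exact Submodule.zero_mem _

theorem MRaux.zero_mem : (0 : AddMonoidAlgebra R (Fin k → ℤ)) ∈ multiReesSet Js :=
  fun _ => Submodule.zero_mem _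

theorem MRaux.add_mem {a b : AddMonoidAlgebra R (Fin k → ℤ)}
    (ha : a ∈ multiReesSet Js) (hb : b ∈ multiReesSet Js) :
    a + b ∈ multiReesSet Js := fun m => by
  rw [AddMonoidAlgebra.coeff_add, Finsupp.add_apply]
  exact Submodule.add_mem _ (ha m) (hb m)

theorem MRaux.img_zero : (0 : LaurentPolynomial R) ∈ ⇑(collapseVars R k) '' multiReesSet Js :=
  ⟨0, MRaux.zero_mem Js, map_zero _⟩

theorem MRaux.img_add {a b : LaurentPolynomial R}
    (ha : a ∈ ⇑(collapseVars R k) '' multiReesSet Js)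
    (hb : b ∈ ⇑(collapseVars R k) '' multiReesSet Js) :
    a + b ∈ ⇑(collapseVars R k) '' multiReesSet Js := by
  obtain ⟨x, hx, rfl⟩ := ha
  obtain ⟨y, hy, rfl⟩ := hb
  exact ⟨x + y, MRaux.add_mem Js hx hy, map_add _ _ _⟩

theorem MRaux.img_sum {ι : Type*} (s : Finset ι) (F : ι → LaurentPolynomial R)
    (h : ∀ i ∈ s, F i ∈ ⇑(collapseVars R k) '' multiReesSet Js) :
    ∑ i ∈ s, F i ∈ ⇑(collapseVars R k) '' multiReesSet Js :=
  Finset.sum_induction F _ (fun _ _ => MRaux.img_add Js) (MRaux.img_zero Js) h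

theorem MRaux.single_mem_multiRees (v : Fin k → ℤ) (r : R)
    (hr : r ∈ ∏ i, Js i ^ (-(v i)).toNat) :
    (AddMonoidAlgebra.single v r : AddMonoidAlgebra R (Fin k → ℤ)) ∈ multiReesSet Js := by
  intro m
  rw [AddMonoidAlgebra.coeff_single, Finsupp.single_apply]
  split_ifs with h
  · exact h ▸ hr
  · exact Submodule.zero_mem _

theorem MRaux.mul_single_mem {g : AddMonoidAlgebra R (Fin k → ℤ)}
    (hg : g ∈ multiReesSet Js) (i : Fin k) {b : R} (hb : b ∈ Js i) :
    g * AddMonoidAlgebra.single (-(Pi.single i 1 : Fin k → ℤ)) b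
      ∈ multiReesSet Js := by
  classical
  intro m
  rw [AddMonoidAlgebra.coeff_mul_single_apply]
  have h1 := hg (m - -(Pi.single i 1 : Fin k → ℤ))
  have h2 : g.coeff (m - -(Pi.single i 1 : Fin k → ℤ)) * b ∈
      (∏ j, Js j ^ (-((m - -(Pi.single i 1 : Fin k → ℤ)) j)).toNat) * Js i :=
    Ideal.mul_mem_mul h1 hb
  refine SetLike.le_def.mp ?_ h2
  have hi : Js i = ∏ j, Js j ^ (Pi.single i 1 : Fin k → ℕ) j := by
    rw [Finset.prod_eq_single i (fun j _ hj => by simp [Pi.single_eq_of_ne hj])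
      (fun h => absurd (Finset.mem_univ i) h)]
    simp
  rw [hi, ← Finset.prod_mul_distrib]
  refine MRaux.prod_ideal_mono _ _ _ fun j _ => ?_
  rw [← pow_add]
  refine Ideal.pow_le_pow_right ?_
  rcases eq_or_ne j i with rfl | hj
  · simp only [Pi.sub_apply, Pi.neg_apply, Pi.single_eq_same]
    omega
  · simp only [Pi.sub_apply, Pi.neg_apply, Pi.single_eq_of_ne hj]
    omega

theorem MRaux.neg_single_mem_image (n : ℕ) {r : R} (hr : r ∈ (∑ i, Js i) ^ n) :
    (AddMonoidAlgebra.single (-(n : ℤ)) r : LaurentPolynomial R) ∈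
      ⇑(collapseVars R k) '' multiReesSet Js := by
  classical
  induction n generalizing r with
  | zero =>
    refine ⟨(AddMonoidAlgebra.single (0 : Fin k → ℤ) r : AddMonoidAlgebra R (Fin k → ℤ)), ?_, ?_⟩
    · refine MRaux.single_mem_multiRees Js _ _ ?_
      have h0 : (∏ i, Js i ^ (-((0 : Fin k → ℤ) i)).toNat) = ⊤ := by
        simp [Ideal.top_pow]
      rw [h0]
      exact Submodule.mem_top
    · rw [MRaux.collapse_eq, AddMonoidAlgebra.mapDomain_single]
      simp
  | succ n ih =>
    rw [pow_succ] at hr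
    refine Submodule.mul_induction_on hr (fun a ha b hb => ?_) (fun x y ihx ihy => ?_)
    ·
      obtain ⟨f, hf, rfl⟩ := MRaux.mem_sum_ideals Finset.univ Js hb
      rw [Finset.mul_sum, show ∀ (e : ℤ) (g : Fin k → R), AddMonoidAlgebra.single e (∑ i, g i) = ∑ i, AddMonoidAlgebra.single e (g i) from fun e g => map_sum (AddMonoidAlgebra.singleAddHom e) g _]
      refine MRaux.img_sum Js _ _ fun i _ => ?_
      obtain ⟨g, hg, hge⟩ := ih ha
      refine ⟨g * AddMonoidAlgebra.single (-(Pi.single i 1 : Fin k → ℤ)) (f i),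
        MRaux.mul_single_mem Js hg i (hf i (Finset.mem_univ i)), ?_⟩
      rw [map_mul, hge]
      have hc : collapseVars R k
          (AddMonoidAlgebra.single (-(Pi.single i 1 : Fin k → ℤ)) (f i)) =
          AddMonoidAlgebra.single (∑ j, (-(Pi.single i 1 : Fin k → ℤ)) j) (f i) := by
        rw [MRaux.collapse_eq]
        exact AddMonoidAlgebra.mapDomain_single
      have hsum : (∑ j, (-(Pi.single i 1 : Fin k → ℤ)) j) = -1 := by
        simp [Finset.sum_pi_single']
      rw [hc, hsum, AddMonoidAlgebra.single_mul_single]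
      congr 1
      push_cast
      ring
    · rw [AddMonoidAlgebra.single_add]
      exact MRaux.img_add Js ihx ihy

end Aux

/-- For `k ≥ 1`, the image under `tᵢ ↦ t` of the
multivariable extended Rees algebra `A(J₁, …, J_k)` is exactly the extended
Rees algebra `A(J₁ + ⋯ + J_k)` of the sum ideal. -/
theorem image_multiReesSet_eq_extendedReesSet_sum {R : Type*} [CommRing R]
    {k : ℕ} (hk : 0 < k) (Js : Fin k → Ideal R) :
    ⇑(collapseVars R k) '' multiReesSet Js = extendedReesSet (∑ i, Js i) := by
  classical
  ext f
  constructor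
  · rintro ⟨g, hg, rfl⟩
    exact MRaux.collapse_mem Js hg
  · intro hf
    have hfs : f = ∑ m ∈ f.coeff.support, AddMonoidAlgebra.single m (f.coeff m) := by
      conv_lhs => rw [← AddMonoidAlgebra.sum_coeff_single f]
      rfl
    rw [hfs]
    refine MRaux.img_sum Js _ _ fun m _ => ?_
    have hm := hf m
    rcases le_or_gt 0 m with h0 | h0
    · set v : Fin k → ℤ := Pi.single (⟨0, hk⟩ : Fin k) m with hv
      refine ⟨(AddMonoidAlgebra.single v (f.coeff m) : AddMonoidAlgebra R (Fin k → ℤ)), ?_, ?_⟩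
      · refine MRaux.single_mem_multiRees Js _ _ ?_
        have hz : ∀ j, (-(v j)).toNat = 0 := by
          intro j
          rcases eq_or_ne j (⟨0, hk⟩ : Fin k) with rfl | hj
          · rw [hv]; simp only [Pi.single_eq_same]; omega
          · rw [hv]; simp [Pi.single_eq_of_ne hj]
        have h1 : (∏ j, Js j ^ (-(v j)).toNat) = ⊤ := by
          simp [hz, Ideal.top_pow]
        rw [h1]
        exact Submodule.mem_top
      · rw [MRaux.collapse_eq, AddMonoidAlgebra.mapDomain_single]
        congr 1
        rw [hv]
        simp [Finset.sum_pi_single']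
    · obtain ⟨n, rfl⟩ : ∃ n : ℕ, m = -(n : ℤ) := ⟨(-m).toNat, by omega⟩
      refine MRaux.neg_single_mem_image Js n ?_
      simpa using hm
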